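/- Fix α,β∈ℝ with α≠1, let Y_{α,β}(x,y)=(((1+α)/2)x+((α−1)/2)(y+β), ((α−1)/2)x+((1+α)/2)(y+β)) and f(x,y)=y. Then on the x-axis Σ the field Y_{α,β} has exactly one tangency point, namely i=(i₁,0) with i₁=(1+α)β/(1−α): one has Y_{α,β}.f(x,0)=((α−1)/2)(x−i₁), which vanishes iff x=i₁, and at the tangency point (Y_{α,β})².f(i₁,0)=−αβ. In particular, if α<0 then (i₁,0) is a Σ-fold of Y_{α,β} which is invisible (for the field acting in y≤0) when β>0 and visible when β<0. -/

import Mathlib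

lemma aux_fderiv (c1 c2 β : ℝ) (p v : ℝ × ℝ) :
    fderiv ℝ (fun p : ℝ × ℝ => c1 * p.1 + c2 * (p.2 + β)) p v
      = c1 * v.1 + c2 * v.2 := by
  have h : HasFDerivAt (fun p : ℝ × ℝ => c1 * p.1 + c2 * (p.2 + β))
      ((c1 • (ContinuousLinearMap.fst ℝ ℝ ℝ)) + (c2 • (ContinuousLinearMap.snd ℝ ℝ ℝ))) p := by
    have h1 : HasFDerivAt (fun p : ℝ × ℝ => c1 * p.1)
        (c1 • (ContinuousLinearMap.fst ℝ ℝ ℝ)) p := by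
      exact (hasFDerivAt_fst (p := p)).const_smul c1
    have h2 : HasFDerivAt (fun p : ℝ × ℝ => c2 * (p.2 + β))
        (c2 • (ContinuousLinearMap.snd ℝ ℝ ℝ)) p := by
      simpa [Pi.smul_def, smul_eq_mul] using ((hasFDerivAt_snd (p := p)).add_const β).const_smul c2
    exact h1.add h2
  rw [h.fderiv]
  simp

/-- For α ≠ 1, Y_{α,β} has exactly one tangency point i = (i₁,0) on the
x-axis, with i₁ = (1+α)β/(1-α); moreover Y².f(i₁,0) = -αβ, so for α < 0 the
fold is invisible (for a field in y ≤ 0) when β > 0 and visible when β < 0. -/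
theorem stmt_5 (α β : ℝ) (hα : α ≠ 1) :
    let Y : ℝ × ℝ → ℝ × ℝ := fun p =>
      (((1 + α) / 2) * p.1 + ((α - 1) / 2) * (p.2 + β),
       ((α - 1) / 2) * p.1 + ((1 + α) / 2) * (p.2 + β))
    let Yf : ℝ × ℝ → ℝ := fun p => (Y p).2
    let Y2f : ℝ × ℝ → ℝ := fun p => fderiv ℝ Yf p (Y p)
    let i₁ : ℝ := (1 + α) * β / (1 - α)
    (∀ x : ℝ, Yf (x, 0) = ((α - 1) / 2) * (x - i₁)) ∧
    (∀ x : ℝ, Yf (x, 0) = 0 ↔ x = i₁) ∧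
    Y2f (i₁, 0) = -α * β ∧
    (α < 0 → (0 < β → 0 < -α * β) ∧ (β < 0 → -α * β < 0)) := by
  intro Y Yf Y2f i₁
  have hne : (1 : ℝ) - α ≠ 0 := by intro h; apply hα; linarith
  have hi : i₁ * (1 - α) = (1 + α) * β := by
    simp only [i₁]; field_simp
  have h1 : ∀ x : ℝ, Yf (x, 0) = ((α - 1) / 2) * (x - i₁) := by
    intro x
    simp only [Yf, Y]
    field_simp
    nlinarith [hi]
  refine ⟨h1, ?_, ?_, ?_⟩
  · intro x
    rw [h1 x]
    constructor
    · intro h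
      rcases mul_eq_zero.mp h with h | h
      · exfalso; apply hα; linarith [(div_eq_zero_iff.mp h).resolve_right (by norm_num)]
      · linarith
    · intro h; rw [h]; ring
  · simp only [Y2f, Yf, Y]
    rw [aux_fderiv]
    simp only []
    linear_combination (-(1+α)/2) * hi
  · intro hα0
    constructor
    · intro hβ; exact mul_pos (neg_pos.mpr hα0) hβ
    · intro hβ; exact mul_neg_of_pos_of_neg (neg_pos.mpr hα0) hβ
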